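/- For every unweighted congestion game with cubic latency functions ℓ_e(x) = α_e x³ (α_e ≥ 0), there exists a pure Nash equilibrium S such that SUM(S) ≤ 3.322·SUM(O) for every strategy profile O. In particular, the price of stability of any such game is at most 3.322. -/

import Mathlib

open Finset

namespace CG

variable {n : ℕ} {E : Type*} [Fintype E] [DecidableEq E]

/-- The congestion (total weight) of resource `e` in profile `S`. -/
noncomputable def load (w : Fin n → ℝ) (S : Fin n → Finset E) (e : E) : ℝ :=
  ∑ i ∈ univ.filter fun i => e ∈ S i, w i

/-- The cost of player `i` in profile `S`. -/
noncomputable def cost (w : Fin n → ℝ) (ℓ : E → ℝ → ℝ) (S : Fin n → Finset E) (i : Fin n) : ℝ :=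
  ∑ e ∈ S i, ℓ e (load w S e)

/-- The social cost `SUM(S)`, the sum of the players' costs. -/
noncomputable def social (w : Fin n → ℝ) (ℓ : E → ℝ → ℝ) (S : Fin n → Finset E) : ℝ :=
  ∑ i, cost w ℓ S i

/-- The congestion of resource `e` due to the players preceding `i` (used for one-round walks). -/
noncomputable def preLoad (w : Fin n → ℝ) (S : Fin n → Finset E) (i : Fin n) (e : E) : ℝ :=
  ∑ j ∈ univ.filter fun j => j < i ∧ e ∈ S j, w j

end CG

open CG

set_option linter.unusedSectionVars false

namespace PoSAux

variable {n : ℕ} {E : Type*} [Fintype E] [DecidableEq E]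

/-- Number of players using resource `e`. -/
def nl (S : Fin n → Finset E) (e : E) : ℕ := (univ.filter fun i => e ∈ S i).card

lemma load_eq (w : Fin n → ℝ) (hw : ∀ i, w i = 1) (S : Fin n → Finset E) (e : E) :
    load w S e = (nl S e : ℝ) := by
  simp [CG.load, nl, hw]

lemma filter_update (S : Fin n → Finset E) (i : Fin n) (t : Finset E) (e : E) :
    (univ.filter fun j => e ∈ Function.update S i t j)
      = if e ∈ t then insert i ((univ.filter fun j => e ∈ S j).erase i)
        else (univ.filter fun j => e ∈ S j).erase i := by
  ext j
  by_cases hj : j = i <;> by_cases ht : e ∈ t <;>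
    simp [Function.update_apply, hj, ht]

lemma nl_update_mem_mem (S : Fin n → Finset E) (i : Fin n) (t : Finset E) (e : E)
    (h1 : e ∈ S i) (h2 : e ∈ t) : nl (Function.update S i t) e = nl S e := by
  have hi : i ∈ univ.filter fun j => e ∈ S j := by simp [h1]
  rw [nl, filter_update, if_pos h2, Finset.insert_erase hi]
  rfl

lemma nl_update_mem_not (S : Fin n → Finset E) (i : Fin n) (t : Finset E) (e : E)
    (h1 : e ∈ S i) (h2 : e ∉ t) : nl (Function.update S i t) e + 1 = nl S e := by
  have hi : i ∈ univ.filter fun j => e ∈ S j := by simp [h1]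
  simp only [nl]
  rw [filter_update, if_neg h2, Finset.card_erase_of_mem hi]
  have : 1 ≤ (univ.filter fun j => e ∈ S j).card := Finset.card_pos.2 ⟨i, hi⟩
  omega

lemma nl_update_not_mem (S : Fin n → Finset E) (i : Fin n) (t : Finset E) (e : E)
    (h1 : e ∉ S i) (h2 : e ∈ t) : nl (Function.update S i t) e = nl S e + 1 := by
  have hi : i ∉ univ.filter fun j => e ∈ S j := by simp [h1]
  simp only [nl]
  rw [filter_update, if_pos h2, Finset.erase_eq_of_notMem hi,
    Finset.card_insert_of_notMem hi]

lemma nl_update_not_not (S : Fin n → Finset E) (i : Fin n) (t : Finset E) (e : E)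
    (h1 : e ∉ S i) (h2 : e ∉ t) : nl (Function.update S i t) e = nl S e := by
  have hi : i ∉ univ.filter fun j => e ∈ S j := by simp [h1]
  simp only [nl]
  rw [filter_update, if_neg h2, Finset.erase_eq_of_notMem hi]

lemma nl_update_le (S : Fin n → Finset E) (i : Fin n) (t : Finset E) (e : E) :
    nl (Function.update S i t) e ≤ nl S e + 1 := by
  by_cases h1 : e ∈ S i <;> by_cases h2 : e ∈ t
  · rw [nl_update_mem_mem S i t e h1 h2]; omega
  · have := nl_update_mem_not S i t e h1 h2; omega
  · rw [nl_update_not_mem S i t e h1 h2]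
  · rw [nl_update_not_not S i t e h1 h2]; omega

/-- Real Rosenthal potential summand. -/
noncomputable def psi (x : ℝ) : ℝ := x^2*(x+1)^2/4

/-- The Rosenthal potential. -/
noncomputable def pot (α : E → ℝ) (S : Fin n → Finset E) : ℝ :=
  ∑ e : E, α e * psi (nl S e)

lemma psi_succ (x : ℝ) : psi (x+1) - psi x = (x+1)^3 := by
  unfold psi; ring

lemma cost_eq (w : Fin n → ℝ) (hw : ∀ i, w i = 1) (α : E → ℝ) (ℓ : E → ℝ → ℝ)
    (hℓ : ∀ e x, ℓ e x = α e * x ^ 3) (S : Fin n → Finset E) (i : Fin n) :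
    cost w ℓ S i = ∑ e ∈ S i, α e * (nl S e : ℝ)^3 := by
  unfold CG.cost
  refine Finset.sum_congr rfl fun e _ => ?_
  rw [hℓ, load_eq w hw]

/-- Potential difference equals the deviator's cost difference. -/
lemma pot_diff (w : Fin n → ℝ) (hw : ∀ i, w i = 1) (α : E → ℝ) (ℓ : E → ℝ → ℝ)
    (hℓ : ∀ e x, ℓ e x = α e * x ^ 3) (S : Fin n → Finset E) (i : Fin n) (t : Finset E) :
    pot α (Function.update S i t) - pot α S
      = cost w ℓ (Function.update S i t) i - cost w ℓ S i := by
  set T := Function.update S i t with hT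
  have hTi : T i = t := Function.update_self i t S
  rw [cost_eq w hw α ℓ hℓ, cost_eq w hw α ℓ hℓ, hTi]
  have ht : ∑ e ∈ t, α e * (nl T e : ℝ)^3
      = ∑ e : E, if e ∈ t then α e * (nl T e : ℝ)^3 else 0 := by
    rw [Finset.sum_ite_mem, Finset.univ_inter]
  have hs : ∑ e ∈ S i, α e * (nl S e : ℝ)^3
      = ∑ e : E, if e ∈ S i then α e * (nl S e : ℝ)^3 else 0 := by
    rw [Finset.sum_ite_mem, Finset.univ_inter]
  rw [ht, hs, pot, pot, ← Finset.sum_sub_distrib, ← Finset.sum_sub_distrib]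
  refine Finset.sum_congr rfl fun e _ => ?_
  by_cases h1 : e ∈ S i <;> by_cases h2 : e ∈ t
  · have h : nl T e = nl S e := nl_update_mem_mem S i t e h1 h2
    simp only [if_pos h1, if_pos h2, ← hT, h]
    ring
  · have h := nl_update_mem_not S i t e h1 h2
    have hc : (nl S e : ℝ) = (nl T e : ℝ) + 1 := by
      rw [← h]; push_cast; ring
    simp only [if_pos h1, if_neg h2, ← hT, hc]
    have := psi_succ (nl T e : ℝ)
    linear_combination (-(α e)) * this
  · have h := nl_update_not_mem S i t e h1 h2
    have hc : (nl T e : ℝ) = (nl S e : ℝ) + 1 := by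
      rw [h]; push_cast; ring
    simp only [if_neg h1, if_pos h2, ← hT, hc]
    have := psi_succ (nl S e : ℝ)
    linear_combination (α e) * this
  · have h : nl T e = nl S e := nl_update_not_not S i t e h1 h2
    simp only [if_neg h1, if_neg h2, ← hT, h]
    ring

/-- Swap a double sum. -/
lemma swap_sum (O : Fin n → Finset E) (f : E → ℝ) :
    ∑ i : Fin n, ∑ e ∈ O i, f e = ∑ e : E, (nl O e : ℝ) * f e := by
  have : ∀ i, ∑ e ∈ O i, f e = ∑ e : E, if e ∈ O i then f e else 0 := fun i => by
    rw [Finset.sum_ite_mem, Finset.univ_inter]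
  simp_rw [this]
  rw [Finset.sum_comm]
  refine Finset.sum_congr rfl fun e _ => ?_
  rw [Finset.sum_ite, Finset.sum_const_zero, add_zero, Finset.sum_const, nl,
    nsmul_eq_mul]

lemma social_eq (w : Fin n → ℝ) (hw : ∀ i, w i = 1) (α : E → ℝ) (ℓ : E → ℝ → ℝ)
    (hℓ : ∀ e x, ℓ e x = α e * x ^ 3) (S : Fin n → Finset E) :
    social w ℓ S = ∑ e : E, α e * (nl S e : ℝ)^4 := by
  unfold CG.social
  simp_rw [cost_eq w hw α ℓ hℓ]
  rw [swap_sum]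
  refine Finset.sum_congr rfl fun e _ => ?_
  ring

end PoSAux

open PoSAux

theorem key_ineq (x y : ℝ) (hx : x = 0 ∨ 1 ≤ x) (hy : y = 0 ∨ 1 ≤ y) :
    (6683/10000)*x^4 + (3317/10000)*(y*(x+1)^3) + (299/100)*psi y
      ≤ (3322/1000)*y^4 + (299/100)*psi x := by
  unfold PoSAux.psi
  rcases hx with hx | hx
  · subst hx
    rcases hy with hy | hy
    · subst hy; norm_num
    · nlinarith [sq_nonneg y, sq_nonneg (y-1), mul_nonneg (mul_nonneg (by linarith : (0:ℝ) ≤ y) (by linarith : (0:ℝ) ≤ y)) (by linarith : (0:ℝ) ≤ y-1), sq_nonneg (y*(y-1))]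
  · rcases hy with hy | hy
    · subst hy
      nlinarith [sq_nonneg x, sq_nonneg (x*(x-1)), mul_nonneg (by linarith : (0:ℝ) ≤ x) (by linarith : (0:ℝ) ≤ x)]
    · have ha : (0:ℝ) ≤ x - 1 := by linarith
      have hb : (0:ℝ) ≤ y - 1 := by linarith
      have h2 : 159216*(x-1)*(y-1) ≤ 148700*(x-1)^2 + 408580*(y-1)^2 := by
        nlinarith [sq_nonneg ((x-1) - (5354/10000)*(y-1)), sq_nonneg (y-1)]
      have h3 : 79608*(x-1)^2*(y-1) ≤ 59204*(x-1)^3 + 352120*(y-1)^3 := by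
        nlinarith [mul_nonneg (sq_nonneg ((x-1)-(y-1))) (by linarith : (0:ℝ) ≤ 2*(x-1)+(y-1)),
          mul_nonneg (mul_nonneg ha ha) ha, mul_nonneg (mul_nonneg hb hb) hb]
      have h4 : 13268*(x-1)^3*(y-1) ≤ 3168*(x-1)^4 + 102980*(y-1)^4 := by
        nlinarith [sq_nonneg ((x-1)^2 - (3317/1584)*(x-1)*(y-1) - (3371/1000)*(y-1)^2),
          sq_nonneg ((x-1)*(y-1) - (2994/1000)*(y-1)^2), sq_nonneg (y-1), sq_nonneg ((x-1)*(y-1))]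
      nlinarith [h2, h3, h4, ha, hb]

theorem pos_unweighted_cubic
    (n : ℕ) (E : Type*) [Fintype E] [DecidableEq E]
    (w : Fin n → ℝ) (hw : ∀ i, w i = 1)
    (Strat : Fin n → Set (Finset E)) (hStrat : ∀ i, (Strat i).Nonempty)
    (α : E → ℝ) (hα : ∀ e, 0 ≤ α e)
    (ℓ : E → ℝ → ℝ) (hℓ : ∀ e x, ℓ e x = α e * x ^ 3) :
    ∃ S : Fin n → Finset E, (∀ i, S i ∈ Strat i) ∧
      (∀ i, ∀ t ∈ Strat i, cost w ℓ S i ≤ cost w ℓ (Function.update S i t) i) ∧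
      ∀ O : Fin n → Finset E, (∀ i, O i ∈ Strat i) →
        social w ℓ S ≤ 3.322 * social w ℓ O := by
  classical
  haveI : Nonempty {T : Fin n → Finset E // ∀ i, T i ∈ Strat i} :=
    ⟨⟨fun i => (hStrat i).some, fun i => (hStrat i).some_mem⟩⟩
  obtain ⟨⟨S, hS⟩, hmin⟩ :=
    Finite.exists_min (fun T : {T : Fin n → Finset E // ∀ i, T i ∈ Strat i} => pot α T.1)
  have hmin' : ∀ T : Fin n → Finset E, (∀ i, T i ∈ Strat i) → pot α S ≤ pot α T :=
    fun T hT => hmin ⟨T, hT⟩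
  -- S is a pure Nash equilibrium
  have hpne : ∀ i, ∀ t ∈ Strat i, cost w ℓ S i ≤ cost w ℓ (Function.update S i t) i := by
    intro i t ht
    have hadm : ∀ j, Function.update S i t j ∈ Strat j := by
      intro j
      rcases eq_or_ne j i with rfl | hj
      · simpa using ht
      · simpa [Function.update_of_ne hj] using hS j
    have h1 := hmin' (Function.update S i t) hadm
    have h2 := pot_diff w hw α ℓ hℓ S i t
    linarith
  refine ⟨S, hS, hpne, ?_⟩
  intro O hO
  -- notation
  set x : E → ℝ := fun e => (nl S e : ℝ) with hx
  set y : E → ℝ := fun e => (nl O e : ℝ) with hy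
  have hsS : social w ℓ S = ∑ e : E, α e * x e ^ 4 := social_eq w hw α ℓ hℓ S
  have hsO : social w ℓ O = ∑ e : E, α e * y e ^ 4 := social_eq w hw α ℓ hℓ O
  -- Nash inequality summed over players
  have hN : social w ℓ S ≤ ∑ e : E, α e * (y e * (x e + 1) ^ 3) := by
    have step1 : ∀ i, cost w ℓ S i ≤ ∑ e ∈ O i, α e * (x e + 1) ^ 3 := by
      intro i
      refine le_trans (hpne i (O i) (hO i)) ?_
      rw [cost_eq w hw α ℓ hℓ, Function.update_self]
      refine Finset.sum_le_sum fun e _ => ?_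
      refine mul_le_mul_of_nonneg_left ?_ (hα e)
      have hle : (nl (Function.update S i (O i)) e : ℝ) ≤ (nl S e : ℝ) + 1 := by
        exact_mod_cast nl_update_le S i (O i) e
      have h0 : (0:ℝ) ≤ (nl (Function.update S i (O i)) e : ℝ) := Nat.cast_nonneg _
      exact pow_le_pow_left₀ h0 hle 3
    calc social w ℓ S = ∑ i, cost w ℓ S i := rfl
      _ ≤ ∑ i, ∑ e ∈ O i, α e * (x e + 1) ^ 3 := Finset.sum_le_sum fun i _ => step1 i
      _ = ∑ e : E, y e * (α e * (x e + 1) ^ 3) := swap_sum O _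
      _ = ∑ e : E, α e * (y e * (x e + 1) ^ 3) := Finset.sum_congr rfl fun e _ => by ring
  -- potential inequality
  have hP : ∑ e : E, α e * psi (x e) ≤ ∑ e : E, α e * psi (y e) := hmin' O hO
  -- per-resource key inequality
  have hkey : ∑ e : E, α e * ((6683/10000)*(x e)^4 + (3317/10000)*(y e*(x e+1)^3) + (299/100)*psi (y e))
      ≤ ∑ e : E, α e * ((3322/1000)*(y e)^4 + (299/100)*psi (x e)) := by
    refine Finset.sum_le_sum fun e _ => mul_le_mul_of_nonneg_left (key_ineq (x e) (y e) ?_ ?_) (hα e)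
    · rcases Nat.eq_zero_or_pos (nl S e) with h | h
      · left; exact Nat.cast_eq_zero.mpr h
      · right; exact Nat.one_le_cast.mpr h
    · rcases Nat.eq_zero_or_pos (nl O e) with h | h
      · left; exact Nat.cast_eq_zero.mpr h
      · right; exact Nat.one_le_cast.mpr h
  -- decompose the summed key inequality
  have e1 : ∑ e : E, α e * ((6683/10000)*(x e)^4 + (3317/10000)*(y e*(x e+1)^3) + (299/100)*psi (y e))
      = (6683/10000) * (∑ e : E, α e * x e ^ 4)
        + (3317/10000) * (∑ e : E, α e * (y e * (x e + 1) ^ 3))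
        + (299/100) * (∑ e : E, α e * psi (y e)) := by
    rw [Finset.mul_sum, Finset.mul_sum, Finset.mul_sum, ← Finset.sum_add_distrib,
      ← Finset.sum_add_distrib]
    exact Finset.sum_congr rfl fun e _ => by ring
  have e2 : ∑ e : E, α e * ((3322/1000)*(y e)^4 + (299/100)*psi (x e))
      = (3322/1000) * (∑ e : E, α e * y e ^ 4) + (299/100) * (∑ e : E, α e * psi (x e)) := by
    rw [Finset.mul_sum, Finset.mul_sum, ← Finset.sum_add_distrib]
    exact Finset.sum_congr rfl fun e _ => by ring
  rw [e1, e2] at hkey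
  have hc : (3.322 : ℝ) = 3322/1000 := by norm_num
  rw [hc, hsO]
  linarith [hkey, hP, hN, hsS]
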